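/- arXiv:2310.14463 — 2 statements merged into one kernel-verified Lean document; each statement's English description precedes it below -/
import Mathlib

section
/- For any real x with 0 < xm ≤ π/2 and |x| ≤ xm, the cosine function satisfies cos x ≤ 1 - ((1 - cos xm) / xm²) * x². -/
open Real

theorem cos_quadratic_upper (xm x : ℝ) (hxm0 : 0 < xm) (hxm : xm ≤ π / 2)
    (hx : |x| ≤ xm) :
    Real.cos x ≤ 1 - ((1 - Real.cos xm) / xm ^ 2) * x ^ 2 := by
  have hpi := Real.pi_pos
  set y := |x| with hy
  have hy0 : 0 ≤ y := abs_nonneg x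
  have hcosx : Real.cos x = Real.cos y := (Real.cos_abs x).symm
  have hx2 : x ^ 2 = y ^ 2 := (sq_abs x).symm
  -- concavity of sin on [0, π]
  have key : (y / xm) * Real.sin (xm / 2) ≤ Real.sin (y / 2) := by
    have h0 : (0 : ℝ) ∈ Set.Icc 0 π := by constructor <;> linarith
    have h1 : xm / 2 ∈ Set.Icc 0 π := by constructor <;> linarith
    have ha : (0:ℝ) ≤ 1 - y / xm := by
      have : y / xm ≤ 1 := (div_le_one hxm0).2 hx
      linarith
    have hb : (0:ℝ) ≤ y / xm := div_nonneg hy0 hxm0.le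
    have hconc := strictConcaveOn_sin_Icc.concaveOn.2 h0 h1 ha hb (by ring)
    have h2 : (1 - y / xm) • (0:ℝ) + (y / xm) • (xm / 2) = y / 2 := by
      rw [smul_eq_mul, smul_eq_mul, mul_zero, zero_add, div_mul_div_comm, mul_comm y xm, mul_div_mul_left _ _ hxm0.ne']
    rw [h2, smul_eq_mul, smul_eq_mul, Real.sin_zero, mul_zero, zero_add] at hconc
    exact hconc
  have hsin_y : 0 ≤ Real.sin (y / 2) :=
    Real.sin_nonneg_of_nonneg_of_le_pi (by linarith) (by linarith)
  have hsq : ((y / xm) * Real.sin (xm / 2)) ^ 2 ≤ Real.sin (y / 2) ^ 2 := by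
    apply sq_le_sq' _ key
    have : 0 ≤ (y / xm) * Real.sin (xm / 2) :=
      mul_nonneg (div_nonneg hy0 hxm0.le)
        (Real.sin_nonneg_of_nonneg_of_le_pi (by linarith) (by linarith))
    linarith
  have hcy : Real.cos y = 1 - 2 * Real.sin (y / 2) ^ 2 := by
    have := Real.cos_two_mul' (y / 2)
    have h2 := Real.sin_sq_add_cos_sq (y / 2)
    have : Real.cos (2 * (y / 2)) = Real.cos (y/2)^2 - Real.sin (y/2)^2 := this
    rw [show 2 * (y / 2) = y by ring] at this
    nlinarith
  have hcxm : Real.cos xm = 1 - 2 * Real.sin (xm / 2) ^ 2 := by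
    have := Real.cos_two_mul' (xm / 2)
    rw [show 2 * (xm / 2) = xm by ring] at this
    have h2 := Real.sin_sq_add_cos_sq (xm / 2)
    nlinarith
  rw [hcosx, hx2, hcy, hcxm]
  have hxm2 : (0:ℝ) < xm ^ 2 := by positivity
  rw [div_mul_eq_mul_div, sub_le_sub_iff_left, div_le_iff₀ hxm2]
  have h3 : (y / xm * Real.sin (xm / 2)) ^ 2 * xm ^ 2 = y ^ 2 * Real.sin (xm / 2) ^ 2 := by
    field_simp
  nlinarith [mul_le_mul_of_nonneg_right hsq hxm2.le]
end

section
/- For any real xm with 0 < xm ≤ π/2 and any x with -xm ≤ x ≤ xm, we have sin x ≤ cos(xm/2) * (x - xm/2) + sin(xm/2) and sin x ≥ cos(xm/2) * (x + xm/2) - sin(xm/2). -/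
open Real

/-- `sin x ≥ x - x^3/6` for `x ≥ 0`. -/
lemma aux_sin_ge (x : ℝ) (hx : 0 ≤ x) : x - x ^ 3 / 6 ≤ Real.sin x := by
  have key : MonotoneOn (fun t : ℝ => Real.sin t - (t - t ^ 3 / 6)) (Set.Ici 0) := by
    apply monotoneOn_of_deriv_nonneg (convex_Ici 0)
    · fun_prop
    · intro t ht
      exact ((Real.differentiable_sin t).sub
        ((differentiable_id t).sub ((differentiable_pow 3 t).div_const 6))).differentiableWithinAt
    · intro t ht
      have hD : HasDerivAt (fun t : ℝ => Real.sin t - (t - t ^ 3 / 6))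
          (Real.cos t - (1 - 3 * t ^ 2 / 6)) t := by
        have h1 : HasDerivAt (fun t : ℝ => t - t ^ 3 / 6) (1 - 3 * t ^ 2 / 6) t := by
          exact ((hasDerivAt_id' t).sub (((hasDerivAt_pow 3 t)).div_const 6)).congr_deriv (by norm_num)
        exact (Real.hasDerivAt_sin t).sub h1
      rw [hD.deriv]
      nlinarith [Real.one_sub_sq_div_two_le_cos (x := t)]
  have h0 : (0 : ℝ) ∈ Set.Ici (0 : ℝ) := Set.self_mem_Ici
  have := key h0 (Set.mem_Ici.mpr hx) hx
  simp at this
  linarith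

/-- `tan x ≥ x + x^3/3` for `0 ≤ x < π/2`. -/
lemma aux_tan_ge (x : ℝ) (hx0 : 0 ≤ x) (hx : x < π / 2) : x + x ^ 3 / 3 ≤ Real.tan x := by
  have key : MonotoneOn (fun t : ℝ => Real.tan t - (t + t ^ 3 / 3)) (Set.Ico 0 (π / 2)) := by
    apply monotoneOn_of_deriv_nonneg (convex_Ico 0 (π / 2))
    · apply ContinuousOn.sub
      · intro t ht
        have : Real.cos t ≠ 0 := by
          have := Real.cos_pos_of_mem_Ioo (show t ∈ Set.Ioo (-(π/2)) (π/2) by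
            constructor <;> [linarith [ht.1, Real.pi_pos]; exact ht.2])
          linarith
        exact (Real.continuousAt_tan.mpr this).continuousWithinAt
      · fun_prop
    · intro t ht
      rw [interior_Ico] at ht
      have hc : Real.cos t ≠ 0 := by
        have := Real.cos_pos_of_mem_Ioo (show t ∈ Set.Ioo (-(π/2)) (π/2) by
          constructor <;> [linarith [ht.1, Real.pi_pos]; exact ht.2])
        linarith
      have hD : HasDerivAt (fun t : ℝ => Real.tan t - (t + t ^ 3 / 3))
          (1 / Real.cos t ^ 2 - (1 + 3 * t ^ 2 / 3)) t := by
        have h1 : HasDerivAt (fun t : ℝ => t + t ^ 3 / 3) (1 + 3 * t ^ 2 / 3) t := by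
          exact ((hasDerivAt_id' t).add (((hasDerivAt_pow 3 t)).div_const 3)).congr_deriv (by norm_num)
        exact (Real.hasDerivAt_tan hc).sub h1
      exact hD.differentiableAt.differentiableWithinAt
    · intro t ht
      rw [interior_Ico] at ht
      have hc : Real.cos t ≠ 0 := by
        have := Real.cos_pos_of_mem_Ioo (show t ∈ Set.Ioo (-(π/2)) (π/2) by
          constructor <;> [linarith [ht.1, Real.pi_pos]; exact ht.2])
        linarith
      have hD : HasDerivAt (fun t : ℝ => Real.tan t - (t + t ^ 3 / 3))
          (1 / Real.cos t ^ 2 - (1 + 3 * t ^ 2 / 3)) t := by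
        have h1 : HasDerivAt (fun t : ℝ => t + t ^ 3 / 3) (1 + 3 * t ^ 2 / 3) t := by
          exact ((hasDerivAt_id' t).add (((hasDerivAt_pow 3 t)).div_const 3)).congr_deriv (by norm_num)
        exact (Real.hasDerivAt_tan hc).sub h1
      rw [hD.deriv]
      have h1 : 1 / Real.cos t ^ 2 = 1 + Real.tan t ^ 2 := by
        rw [Real.tan_eq_sin_div_cos]
        field_simp
        linarith [Real.sin_sq_add_cos_sq t]
      have htan : t ≤ Real.tan t := (Real.lt_tan ht.1 ht.2).le
      have hsq : t ^ 2 ≤ Real.tan t ^ 2 := by nlinarith [ht.1.le]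
      rw [h1]
      linarith
  rcases eq_or_lt_of_le hx0 with h | h
  · simp [← h]
  · have h0 : (0 : ℝ) ∈ Set.Ico (0:ℝ) (π/2) := ⟨le_refl 0, by linarith [Real.pi_pos]⟩
    have := key h0 (Set.mem_Ico.mpr ⟨hx0, hx⟩) hx0
    simp at this
    linarith

/-- Endpoint inequality: `sin c * (1 + 2 cos c) ≥ 3 c cos c` for `0 < c ≤ π/4`. -/
lemma aux_endpoint (c : ℝ) (hc0 : 0 < c) (hc : c ≤ π / 4) :
    3 * c * Real.cos c ≤ Real.sin c + 2 * Real.sin c * Real.cos c := by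
  have hcpi : c < π / 2 := by linarith [Real.pi_pos]
  have hcos : 0 < Real.cos c := Real.cos_pos_of_mem_Ioo ⟨by linarith [Real.pi_pos], hcpi⟩
  have htan := aux_tan_ge c hc0.le hcpi
  have hsin := aux_sin_ge c hc0.le
  have hts : Real.sin c = Real.tan c * Real.cos c := by
    rw [Real.tan_eq_sin_div_cos]; field_simp
  nlinarith [sq_nonneg c, mul_pos hc0 hcos]

/-- Upper tangent bound. -/
lemma aux_upper (xm x : ℝ) (hxm0 : 0 < xm) (hxm : xm ≤ π / 2)
    (hx1 : -xm ≤ x) (hx2 : x ≤ xm) :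
    Real.sin x ≤ Real.cos (xm / 2) * (x - xm / 2) + Real.sin (xm / 2) := by
  set c := xm / 2 with hc
  have hc0 : 0 < c := by positivity
  have hc4 : c ≤ π / 4 := by rw [hc]; linarith
  have hpi : (0:ℝ) < π := Real.pi_pos
  set g : ℝ → ℝ := fun t => Real.cos c * (t - c) + Real.sin c - Real.sin t with hg
  have hgderiv : ∀ t : ℝ, HasDerivAt g (Real.cos c - Real.cos t) t := by
    intro t
    have h1 : HasDerivAt (fun t : ℝ => Real.cos c * (t - c) + Real.sin c)
        (Real.cos c * 1) t :=
      (((hasDerivAt_id t).sub_const c).const_mul (Real.cos c)).add_const (Real.sin c)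
    exact (h1.sub (Real.hasDerivAt_sin t)).congr_deriv (by ring)
  have hgc : g c = 0 := by simp [hg]
  -- g is nonneg at -xm
  have hgend : 0 ≤ g (-xm) := by
    have h1 : Real.sin (-xm) = -(Real.sin xm) := Real.sin_neg xm
    have h2 : Real.sin xm = 2 * Real.sin c * Real.cos c := by
      rw [hc, show xm = 2 * (xm/2) by ring, Real.sin_two_mul]
      ring
    have := aux_endpoint c hc0 hc4
    have hxm2 : xm = 2 * c := by rw [hc]; ring
    have e : Real.cos c * (-xm - c) = -(3 * c * Real.cos c) := by rw [hxm2]; ring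
    simp only [hg]
    rw [h1, h2]
    linarith [e]
  -- case analysis
  have key : 0 ≤ g x := by
    rcases le_or_gt x (-c) with hcase | hcase
    · -- monotone on [-xm, -c], g(-xm) ≥ 0
      have hmono : MonotoneOn g (Set.Icc (-xm) (-c)) := by
        apply monotoneOn_of_deriv_nonneg (convex_Icc _ _)
        · exact fun t _ => (hgderiv t).continuousAt.continuousWithinAt
        · exact fun t _ => (hgderiv t).differentiableAt.differentiableWithinAt
        · intro t ht
          rw [interior_Icc] at ht
          rw [(hgderiv t).deriv]
          have h1 : Real.cos t = Real.cos (-t) := (Real.cos_neg t).symm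
          have h2 : Real.cos (-t) ≤ Real.cos c := by
            apply Real.cos_le_cos_of_nonneg_of_le_pi hc0.le
            · linarith [ht.1, hxm, hpi]
            · linarith [ht.2]
          linarith
      have := hmono (Set.mem_Icc.mpr ⟨le_refl _, by linarith⟩)
        (Set.mem_Icc.mpr ⟨hx1, hcase⟩) hx1
      linarith
    · rcases le_or_gt x c with hcase2 | hcase2
      · -- antitone on [-c, c], g(c) = 0
        have hanti : AntitoneOn g (Set.Icc (-c) c) := by
          apply antitoneOn_of_deriv_nonpos (convex_Icc _ _)
          · exact fun t _ => (hgderiv t).continuousAt.continuousWithinAt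
          · exact fun t _ => (hgderiv t).differentiableAt.differentiableWithinAt
          · intro t ht
            rw [interior_Icc] at ht
            rw [(hgderiv t).deriv]
            have h2 : Real.cos c ≤ Real.cos t := by
              rw [← Real.cos_abs t]
              apply Real.cos_le_cos_of_nonneg_of_le_pi (abs_nonneg t)
              · linarith
              · rw [abs_le]; exact ⟨ht.1.le, ht.2.le⟩
            linarith
        have := hanti (Set.mem_Icc.mpr ⟨hcase.le, hcase2⟩)
          (Set.mem_Icc.mpr ⟨by linarith, le_refl _⟩) hcase2
        rw [hgc] at this
        linarith
      · -- monotone on [c, xm], g(c) = 0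
        have hmono : MonotoneOn g (Set.Icc c xm) := by
          apply monotoneOn_of_deriv_nonneg (convex_Icc _ _)
          · exact fun t _ => (hgderiv t).continuousAt.continuousWithinAt
          · exact fun t _ => (hgderiv t).differentiableAt.differentiableWithinAt
          · intro t ht
            rw [interior_Icc] at ht
            rw [(hgderiv t).deriv]
            have h2 : Real.cos t ≤ Real.cos c := by
              apply Real.cos_le_cos_of_nonneg_of_le_pi hc0.le
              · linarith [ht.2, hxm, hpi]
              · exact ht.1.le
            linarith
        have := hmono (Set.mem_Icc.mpr ⟨le_refl _, by linarith⟩)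
          (Set.mem_Icc.mpr ⟨hcase2.le, hx2⟩) hcase2.le
        rw [hgc] at this
        linarith
  simp only [hg] at key
  linarith

theorem sin_tangent_envelope (xm x : ℝ) (hxm0 : 0 < xm) (hxm : xm ≤ π / 2)
    (hx1 : -xm ≤ x) (hx2 : x ≤ xm) :
    Real.sin x ≤ Real.cos (xm / 2) * (x - xm / 2) + Real.sin (xm / 2) ∧
    Real.sin x ≥ Real.cos (xm / 2) * (x + xm / 2) - Real.sin (xm / 2) := by
  constructor
  · exact aux_upper xm x hxm0 hxm hx1 hx2
  · have h := aux_upper xm (-x) hxm0 hxm (by linarith) (by linarith)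
    rw [Real.sin_neg] at h
    linarith
end
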